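/- Assume E[∫_0^T S_t² dt] < ∞ and E[|S_0|] < ∞. Suppose the supremum v of E[V^{Φ_0,φ}_T] over all φ ∈ A_{Φ_0} with E[∫_0^T φ_t² dt] < ∞ is finite, and suppose φ¹, φ² ∈ A_{Φ_0} with E[∫_0^T (φ¹_t)² dt] < ∞ and E[∫_0^T (φ²_t)² dt] < ∞ both attain v. Then φ¹ = φ² dt⊗P-almost everywhere on [0,T]×Ω. -/

import Mathlib

open MeasureTheory Set
open scoped ENNReal

/-- The terminal wealth `V^{Φ₀,φ}_T = -Φ₀ S_0 - ∫_0^T φ_t S_t dt - (Λ/2) ∫_0^T φ_t² dt`. -/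
noncomputable def wealth {Ω : Type*} (T Λ Φ₀ : ℝ) (S φ : ℝ → Ω → ℝ) (ω : Ω) : ℝ :=
  -Φ₀ * S 0 ω - (∫ t in Icc (0:ℝ) T, φ t ω * S t ω)
    - (Λ / 2) * ∫ t in Icc (0:ℝ) T, (φ t ω) ^ 2

/-- The admissible set `𝒜_{Φ₀}`: progressively measurable processes `φ` with
`∫_0^T φ_t² dt < ∞` a.s. and `Φ₀ + ∫_0^T φ_t dt = 0` a.s. -/
def isAdmissible {Ω : Type*} {m0 : MeasurableSpace Ω} (T Φ₀ : ℝ)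
    (ℱ : Filtration ℝ m0) (μ : Measure Ω) (φ : ℝ → Ω → ℝ) : Prop :=
  ProgMeasurable ℱ φ ∧
    (∀ᵐ ω ∂μ, IntegrableOn (fun t => (φ t ω) ^ 2) (Icc (0:ℝ) T)) ∧
    (∀ᵐ ω ∂μ, Φ₀ + ∫ t in Icc (0:ℝ) T, φ t ω = 0)

section Aux

variable {Ω : Type*} {m0 : MeasurableSpace Ω} {μ : Measure Ω} [SFinite μ] {T : ℝ}

local notation "ν" => volume.restrict (Icc (0:ℝ) T)

lemma jointAESM (ℱ : Filtration ℝ m0) (f : ℝ → Ω → ℝ) (hf : ProgMeasurable ℱ f) :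
    AEStronglyMeasurable (fun p : ℝ × Ω => f p.1 p.2) ((ν).prod μ) := by
  have hg : StronglyMeasurable[Subtype.instMeasurableSpace.prod m0]
      (fun q : Set.Iic T × Ω => f q.1 q.2) := by
    refine (hf T).mono ?_
    exact sup_le_sup le_rfl (MeasurableSpace.comap_mono (ℱ.le T))
  have he : MeasurableEmbedding (fun q : Set.Iic T × Ω => ((q.1 : ℝ), q.2)) :=
    (MeasurableEmbedding.subtype_coe measurableSet_Iic).prodMap MeasurableEmbedding.id
  have hF : StronglyMeasurable
      (Function.extend (fun q : Set.Iic T × Ω => ((q.1 : ℝ), q.2))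
        (fun q => f q.1 q.2) 0) :=
    he.stronglyMeasurable_extend hg stronglyMeasurable_const
  refine ⟨_, hF, ?_⟩
  have hmem : ∀ᵐ p ∂((ν).prod μ), p.1 ∈ Icc (0:ℝ) T := by
    rw [Measure.restrict_prod_eq_prod_univ]
    filter_upwards [ae_restrict_mem (measurableSet_Icc.prod MeasurableSet.univ)] with p hp
    exact hp.1
  filter_upwards [hmem] with p hp
  have h1 : p.1 ∈ Set.Iic T := hp.2
  have : p = (fun q : Set.Iic T × Ω => ((q.1 : ℝ), q.2)) (⟨p.1, h1⟩, p.2) := rfl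
  rw [this, he.injective.extend_apply]

lemma sliceAESM (F : ℝ × Ω → ℝ) (hF : AEStronglyMeasurable F ((ν).prod μ)) :
    ∀ᵐ ω ∂μ, AEStronglyMeasurable (fun t => F (t, ω)) ν := by
  have h := hF.prod_swap.prodMk_left
  exact h

lemma aemeas_lintegral (G : ℝ × Ω → ℝ≥0∞) (hG : AEMeasurable G ((ν).prod μ)) :
    AEMeasurable (fun ω => ∫⁻ t, G (t, ω) ∂ν) μ := by
  have hGs : AEMeasurable (fun z : Ω × ℝ => G z.swap) (μ.prod ν) := hG.prod_swap
  refine ⟨fun ω => ∫⁻ t, hGs.mk _ (ω, t) ∂ν, hGs.measurable_mk.lintegral_prod_right', ?_⟩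
  filter_upwards [Measure.ae_ae_of_ae_prod hGs.ae_eq_mk] with ω hω
  exact lintegral_congr_ae hω

lemma integrable_sq_slices (f : ℝ → Ω → ℝ)
    (hm : AEStronglyMeasurable (fun p : ℝ × Ω => f p.1 p.2) ((ν).prod μ))
    (hE : ∫⁻ ω, (∫⁻ t, ENNReal.ofReal ((f t ω) ^ 2) ∂ν) ∂μ ≠ ⊤) :
    ∀ᵐ ω ∂μ, Integrable (fun t => (f t ω) ^ 2) ν := by
  have hGm : AEMeasurable (fun p : ℝ × Ω => ENNReal.ofReal ((f p.1 p.2) ^ 2)) ((ν).prod μ) :=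
    ENNReal.measurable_ofReal.comp_aemeasurable ((hm.aemeasurable).pow_const 2)
  have hfin : ∀ᵐ ω ∂μ, (∫⁻ t, ENNReal.ofReal ((f t ω) ^ 2) ∂ν) < ⊤ :=
    ae_lt_top' (aemeas_lintegral _ hGm) hE
  filter_upwards [hfin, sliceAESM _ hm] with ω hω hsm
  refine ⟨hsm.pow 2, ?_⟩
  rw [hasFiniteIntegral_iff_norm]
  calc ∫⁻ t, ENNReal.ofReal ‖(f t ω) ^ 2‖ ∂ν
      = ∫⁻ t, ENNReal.ofReal ((f t ω) ^ 2) ∂ν := by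
        refine lintegral_congr fun t => ?_
        rw [Real.norm_eq_abs, abs_of_nonneg (sq_nonneg _)]
    _ < ⊤ := hω

lemma integrable_mul_sq {α : Type*} {m : MeasurableSpace α} {P : Measure α} {a b : α → ℝ}
    (ha : Integrable (fun t => (a t) ^ 2) P) (hb : Integrable (fun t => (b t) ^ 2) P)
    (hma : AEStronglyMeasurable a P) (hmb : AEStronglyMeasurable b P) :
    Integrable (fun t => a t * b t) P := by
  refine (ha.add hb).mono (hma.mul hmb) ?_
  filter_upwards with t
  simp only [Real.norm_eq_abs, Pi.add_apply]
  rw [abs_of_nonneg (by positivity : (0:ℝ) ≤ (a t) ^ 2 + (b t) ^ 2)]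
  refine abs_le.2 ⟨by nlinarith [sq_nonneg (a t + b t)], by nlinarith [sq_nonneg (a t - b t)]⟩

lemma integrable_of_sq {α : Type*} {m : MeasurableSpace α} {P : Measure α} [IsFiniteMeasure P]
    {a : α → ℝ} (ha : Integrable (fun t => (a t) ^ 2) P) (hma : AEStronglyMeasurable a P) :
    Integrable a P := by
  refine ((integrable_const (1:ℝ)).add ha).mono hma ?_
  filter_upwards with t
  simp only [Real.norm_eq_abs, Pi.add_apply]
  rw [abs_of_nonneg (by positivity : (0:ℝ) ≤ 1 + (a t) ^ 2)]
  nlinarith [sq_nonneg (|a t| - 1), sq_abs (a t)]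

/-- Integrability over ω of `ω ↦ ∫ t, f t ω * g t ω`. -/
lemma integrable_intMul (f g : ℝ → Ω → ℝ)
    (hfm : AEStronglyMeasurable (fun p : ℝ × Ω => f p.1 p.2) ((ν).prod μ))
    (hgm : AEStronglyMeasurable (fun p : ℝ × Ω => g p.1 p.2) ((ν).prod μ))
    (hfs : ∀ᵐ ω ∂μ, Integrable (fun t => (f t ω) ^ 2) ν)
    (hgs : ∀ᵐ ω ∂μ, Integrable (fun t => (g t ω) ^ 2) ν)
    (hfE : ∫⁻ ω, (∫⁻ t, ENNReal.ofReal ((f t ω) ^ 2) ∂ν) ∂μ ≠ ⊤)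
    (hgE : ∫⁻ ω, (∫⁻ t, ENNReal.ofReal ((g t ω) ^ 2) ∂ν) ∂μ ≠ ⊤) :
    Integrable (fun ω => ∫ t, f t ω * g t ω ∂ν) μ := by
  have hFG : AEStronglyMeasurable (fun p : ℝ × Ω => f p.1 p.2 * g p.1 p.2) ((ν).prod μ) :=
    hfm.mul hgm
  have hmeas : AEStronglyMeasurable (fun ω => ∫ t, f t ω * g t ω ∂ν) μ := by
    have := hFG.prod_swap.integral_prod_right'
    exact this
  refine ⟨hmeas, ?_⟩
  rw [hasFiniteIntegral_iff_norm]
  have hb : ∀ᵐ ω ∂μ, ENNReal.ofReal ‖∫ t, f t ω * g t ω ∂ν‖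
      ≤ (∫⁻ t, ENNReal.ofReal ((f t ω) ^ 2) ∂ν) + (∫⁻ t, ENNReal.ofReal ((g t ω) ^ 2) ∂ν) := by
    filter_upwards [hfs, hgs, sliceAESM _ hfm, sliceAESM _ hgm] with ω h1 h2 hm1 hm2
    have habs : Integrable (fun t => |f t ω * g t ω|) ν :=
      (integrable_mul_sq h1 h2 hm1 hm2).abs
    calc ENNReal.ofReal ‖∫ t, f t ω * g t ω ∂ν‖
        ≤ ENNReal.ofReal (∫ t, |f t ω * g t ω| ∂ν) := by
          apply ENNReal.ofReal_le_ofReal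
          have := norm_integral_le_integral_norm (μ := ν) (fun t => f t ω * g t ω)
          simpa [Real.norm_eq_abs, abs_mul] using this
      _ = ∫⁻ t, ENNReal.ofReal (|f t ω * g t ω|) ∂ν :=
          ofReal_integral_eq_lintegral_ofReal habs (Filter.Eventually.of_forall fun t => abs_nonneg _)
      _ ≤ ∫⁻ t, (ENNReal.ofReal ((f t ω) ^ 2) + ENNReal.ofReal ((g t ω) ^ 2)) ∂ν := by
          refine lintegral_mono fun t => ?_
          calc ENNReal.ofReal (|f t ω * g t ω|)
              ≤ ENNReal.ofReal ((f t ω) ^ 2 + (g t ω) ^ 2) := by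
                apply ENNReal.ofReal_le_ofReal
                refine abs_le.2 ⟨by nlinarith [sq_nonneg (f t ω + g t ω)],
                  by nlinarith [sq_nonneg (f t ω - g t ω)]⟩
            _ ≤ _ := ENNReal.ofReal_add_le
      _ = (∫⁻ t, ENNReal.ofReal ((f t ω) ^ 2) ∂ν) + (∫⁻ t, ENNReal.ofReal ((g t ω) ^ 2) ∂ν) := by
          refine lintegral_add_left' ?_ _
          exact ENNReal.measurable_ofReal.comp_aemeasurable (hm1.aemeasurable.pow_const 2)
  calc ∫⁻ ω, ENNReal.ofReal ‖∫ t, f t ω * g t ω ∂ν‖ ∂μ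
      ≤ ∫⁻ ω, ((∫⁻ t, ENNReal.ofReal ((f t ω) ^ 2) ∂ν)
          + (∫⁻ t, ENNReal.ofReal ((g t ω) ^ 2) ∂ν)) ∂μ := lintegral_mono_ae hb
    _ = (∫⁻ ω, (∫⁻ t, ENNReal.ofReal ((f t ω) ^ 2) ∂ν) ∂μ)
          + (∫⁻ ω, (∫⁻ t, ENNReal.ofReal ((g t ω) ^ 2) ∂ν) ∂μ) := by
          refine lintegral_add_left' ?_ _
          exact aemeas_lintegral _
            (ENNReal.measurable_ofReal.comp_aemeasurable (hfm.aemeasurable.pow_const 2))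
    _ < ⊤ := by
          exact ENNReal.add_lt_top.2 ⟨lt_top_iff_ne_top.2 hfE, lt_top_iff_ne_top.2 hgE⟩

end Aux

section Aux2

variable {Ω : Type*} {m0 : MeasurableSpace Ω} {μ : Measure Ω} [SFinite μ] {T : ℝ}

local notation "ν" => volume.restrict (Icc (0:ℝ) T)

lemma ofReal_sq_le_aux {x a b : ℝ} (h : x ^ 2 ≤ 2 * a ^ 2 + 2 * b ^ 2) :
    ENNReal.ofReal (x ^ 2) ≤ 2 * ENNReal.ofReal (a ^ 2) + 2 * ENNReal.ofReal (b ^ 2) := by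
  calc ENNReal.ofReal (x ^ 2) ≤ ENNReal.ofReal (2 * a ^ 2 + 2 * b ^ 2) :=
        ENNReal.ofReal_le_ofReal h
    _ ≤ ENNReal.ofReal (2 * a ^ 2) + ENNReal.ofReal (2 * b ^ 2) := ENNReal.ofReal_add_le
    _ = 2 * ENNReal.ofReal (a ^ 2) + 2 * ENNReal.ofReal (b ^ 2) := by
        rw [ENNReal.ofReal_mul (by norm_num : (0:ℝ) ≤ 2),
          ENNReal.ofReal_mul (by norm_num : (0:ℝ) ≤ 2), ENNReal.ofReal_ofNat]

lemma energy_le (u f g : ℝ → Ω → ℝ)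
    (hfm : AEStronglyMeasurable (fun p : ℝ × Ω => f p.1 p.2) ((ν).prod μ))
    (hgm : AEStronglyMeasurable (fun p : ℝ × Ω => g p.1 p.2) ((ν).prod μ))
    (hu : ∀ t ω, (u t ω) ^ 2 ≤ 2 * (f t ω) ^ 2 + 2 * (g t ω) ^ 2) :
    ∫⁻ ω, (∫⁻ t, ENNReal.ofReal ((u t ω) ^ 2) ∂ν) ∂μ
      ≤ 2 * ∫⁻ ω, (∫⁻ t, ENNReal.ofReal ((f t ω) ^ 2) ∂ν) ∂μ
        + 2 * ∫⁻ ω, (∫⁻ t, ENNReal.ofReal ((g t ω) ^ 2) ∂ν) ∂μ := by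
  have step1 : ∀ᵐ ω ∂μ, (∫⁻ t, ENNReal.ofReal ((u t ω) ^ 2) ∂ν)
      ≤ 2 * (∫⁻ t, ENNReal.ofReal ((f t ω) ^ 2) ∂ν)
        + 2 * (∫⁻ t, ENNReal.ofReal ((g t ω) ^ 2) ∂ν) := by
    filter_upwards [sliceAESM _ hfm, sliceAESM _ hgm] with ω h1 h2
    calc (∫⁻ t, ENNReal.ofReal ((u t ω) ^ 2) ∂ν)
        ≤ ∫⁻ t, (2 * ENNReal.ofReal ((f t ω) ^ 2) + 2 * ENNReal.ofReal ((g t ω) ^ 2)) ∂ν :=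
          lintegral_mono fun t => ofReal_sq_le_aux (hu t ω)
      _ = 2 * (∫⁻ t, ENNReal.ofReal ((f t ω) ^ 2) ∂ν)
          + 2 * (∫⁻ t, ENNReal.ofReal ((g t ω) ^ 2) ∂ν) := by
          have ham : AEMeasurable (fun t => 2 * ENNReal.ofReal ((f t ω) ^ 2)) ν := by
            exact (ENNReal.measurable_ofReal.comp_aemeasurable (h1.aemeasurable.pow_const 2)).const_mul 2
          rw [lintegral_add_left' ham,
            lintegral_const_mul' 2 _ (by norm_num), lintegral_const_mul' 2 _ (by norm_num)]
  calc ∫⁻ ω, (∫⁻ t, ENNReal.ofReal ((u t ω) ^ 2) ∂ν) ∂μ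
      ≤ ∫⁻ ω, (2 * (∫⁻ t, ENNReal.ofReal ((f t ω) ^ 2) ∂ν)
          + 2 * (∫⁻ t, ENNReal.ofReal ((g t ω) ^ 2) ∂ν)) ∂μ := lintegral_mono_ae step1
    _ = _ := by
        have ham : AEMeasurable
            (fun ω => 2 * ∫⁻ t, ENNReal.ofReal ((f t ω) ^ 2) ∂ν) μ := by
          exact (aemeas_lintegral _
            (ENNReal.measurable_ofReal.comp_aemeasurable (hfm.aemeasurable.pow_const 2))).const_mul 2
        rw [lintegral_add_left' ham,
          lintegral_const_mul' 2 _ (by norm_num), lintegral_const_mul' 2 _ (by norm_num)]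

end Aux2

/-- Assume `E[∫_0^T S_t² dt] < ∞` and `E[|S_0|] < ∞`.  Suppose the
supremum `v` of `E[V^{Φ₀,φ}_T]` over all `φ ∈ 𝒜_{Φ₀}` with `E[∫_0^T φ_t² dt] < ∞` is
finite, and suppose `φ¹, φ² ∈ 𝒜_{Φ₀}` with finite energy both attain `v`.  Then
`φ¹ = φ²` holds `dt ⊗ P`-almost everywhere on `[0,T] × Ω`. -/
theorem stmt_9
    {Ω : Type*} {m0 : MeasurableSpace Ω} {μ : Measure Ω} [IsProbabilityMeasure μ]
    (T : ℝ) (hT : 0 < T) (Λ : ℝ) (hΛ : 0 < Λ) (Φ₀ : ℝ)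
    (ℱ : Filtration ℝ m0)
    (S : ℝ → Ω → ℝ)
    (hprog : ProgMeasurable ℱ S)
    (hS2 : ∫⁻ ω, (∫⁻ t in Icc (0:ℝ) T, ENNReal.ofReal ((S t ω) ^ 2)) ∂μ < ⊤)
    (hS0 : Integrable (S 0) μ)
    (v : ℝ)
    -- `v` is an upper bound for the expected terminal wealth over all admissible
    -- strategies with finite energy:
    (hub : ∀ φ : ℝ → Ω → ℝ, isAdmissible T Φ₀ ℱ μ φ →
      (∫⁻ ω, (∫⁻ t in Icc (0:ℝ) T, ENNReal.ofReal ((φ t ω) ^ 2)) ∂μ < ⊤) →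
      ∫ ω, wealth T Λ Φ₀ S φ ω ∂μ ≤ v)
    -- `φ¹` and `φ²` are admissible with finite energy and both attain `v`:
    (φ₁ φ₂ : ℝ → Ω → ℝ)
    (hφ₁ : isAdmissible T Φ₀ ℱ μ φ₁)
    (hφ₂ : isAdmissible T Φ₀ ℱ μ φ₂)
    (hφ₁2 : ∫⁻ ω, (∫⁻ t in Icc (0:ℝ) T, ENNReal.ofReal ((φ₁ t ω) ^ 2)) ∂μ < ⊤)
    (hφ₂2 : ∫⁻ ω, (∫⁻ t in Icc (0:ℝ) T, ENNReal.ofReal ((φ₂ t ω) ^ 2)) ∂μ < ⊤)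
    (hopt₁ : ∫ ω, wealth T Λ Φ₀ S φ₁ ω ∂μ = v)
    (hopt₂ : ∫ ω, wealth T Λ Φ₀ S φ₂ ω ∂μ = v) :
    (fun p : ℝ × Ω => φ₁ p.1 p.2)
      =ᵐ[(volume.restrict (Icc (0:ℝ) T)).prod μ] fun p : ℝ × Ω => φ₂ p.1 p.2 := by
  classical
  haveI : IsFiniteMeasure (volume.restrict (Icc (0:ℝ) T)) :=
    ⟨by simpa [Measure.restrict_apply_univ] using measure_Icc_lt_top (a := (0:ℝ)) (b := T)⟩
  obtain ⟨hP₁, hsq₁, hc₁⟩ := hφ₁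
  obtain ⟨hP₂, hsq₂, hc₂⟩ := hφ₂
  have hM₁ := jointAESM (μ := μ) (T := T) ℱ φ₁ hP₁
  have hM₂ := jointAESM (μ := μ) (T := T) ℱ φ₂ hP₂
  have hMS := jointAESM (μ := μ) (T := T) ℱ S hprog
  have hSsq := integrable_sq_slices (μ := μ) S hMS hS2.ne
  set ψ : ℝ → Ω → ℝ := fun t ω => 2⁻¹ * (φ₁ t ω + φ₂ t ω) with hψdef
  have hPψ : ProgMeasurable ℱ ψ := (progMeasurable_const ℱ 2⁻¹).mul (IsStronglyProgressive.add hP₁ hP₂)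
  have hMψ := jointAESM (μ := μ) (T := T) ℱ ψ hPψ
  have hMD : AEStronglyMeasurable (fun p : ℝ × Ω => φ₁ p.1 p.2 - φ₂ p.1 p.2)
      ((volume.restrict (Icc (0:ℝ) T)).prod μ) := hM₁.sub hM₂
  -- energies
  have hEψ : ∫⁻ ω, (∫⁻ t in Icc (0:ℝ) T, ENNReal.ofReal ((ψ t ω) ^ 2)) ∂μ < ⊤ := by
    refine lt_of_le_of_lt (energy_le ψ φ₁ φ₂ hM₁ hM₂ fun t ω => by
      simp only [hψdef]; nlinarith [sq_nonneg (φ₁ t ω - φ₂ t ω)]) ?_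
    exact ENNReal.add_lt_top.2 ⟨ENNReal.mul_lt_top (by norm_num) hφ₁2,
      ENNReal.mul_lt_top (by norm_num) hφ₂2⟩
  have hED : ∫⁻ ω, (∫⁻ t in Icc (0:ℝ) T, ENNReal.ofReal ((φ₁ t ω - φ₂ t ω) ^ 2)) ∂μ < ⊤ := by
    refine lt_of_le_of_lt (energy_le (fun t ω => φ₁ t ω - φ₂ t ω) φ₁ φ₂ hM₁ hM₂ fun t ω =>
      show (φ₁ t ω - φ₂ t ω) ^ 2 ≤ 2 * (φ₁ t ω) ^ 2 + 2 * (φ₂ t ω) ^ 2 by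
        nlinarith [sq_nonneg (φ₁ t ω + φ₂ t ω)]) ?_
    exact ENNReal.add_lt_top.2 ⟨ENNReal.mul_lt_top (by norm_num) hφ₁2,
      ENNReal.mul_lt_top (by norm_num) hφ₂2⟩
  have hsqψ := integrable_sq_slices (μ := μ) ψ hMψ hEψ.ne
  have hsqD : ∀ᵐ ω ∂μ, Integrable (fun t => (φ₁ t ω - φ₂ t ω) ^ 2)
      (volume.restrict (Icc (0:ℝ) T)) :=
    integrable_sq_slices (μ := μ) (fun t ω => φ₁ t ω - φ₂ t ω) hMD hED.ne
  -- admissibility of ψ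
  have hadψ : isAdmissible T Φ₀ ℱ μ ψ := by
    refine ⟨hPψ, hsqψ, ?_⟩
    filter_upwards [hc₁, hc₂, hsq₁, hsq₂, sliceAESM (μ := μ) _ hM₁, sliceAESM (μ := μ) _ hM₂]
      with ω h1 h2 s1 s2 m1 m2
    have i1 : Integrable (fun t => φ₁ t ω) (volume.restrict (Icc (0:ℝ) T)) :=
      integrable_of_sq s1 m1
    have i2 : Integrable (fun t => φ₂ t ω) (volume.restrict (Icc (0:ℝ) T)) :=
      integrable_of_sq s2 m2
    have heq : ∫ t in Icc (0:ℝ) T, ψ t ω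
        = 2⁻¹ * (∫ t in Icc (0:ℝ) T, φ₁ t ω) + 2⁻¹ * (∫ t in Icc (0:ℝ) T, φ₂ t ω) := by
      rw [integral_congr_ae (Filter.Eventually.of_forall
        (fun t => show ψ t ω = 2⁻¹ * φ₁ t ω + 2⁻¹ * φ₂ t ω by simp only [hψdef]; ring)),
        integral_add (i1.const_mul 2⁻¹) (i2.const_mul 2⁻¹),
        integral_const_mul, integral_const_mul]
    rw [heq]; linarith
  -- pointwise wealth identity
  have hae : ∀ᵐ ω ∂μ, wealth T Λ Φ₀ S ψ ω
      = 2⁻¹ * wealth T Λ Φ₀ S φ₁ ω + 2⁻¹ * wealth T Λ Φ₀ S φ₂ ω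
        + (Λ/8) * ∫ t in Icc (0:ℝ) T, (φ₁ t ω - φ₂ t ω) ^ 2 := by
    filter_upwards [hsq₁, hsq₂, hSsq, hsqD, sliceAESM (μ := μ) _ hM₁, sliceAESM (μ := μ) _ hM₂,
      sliceAESM (μ := μ) _ hMS] with ω h1 h2 hS hD m1 m2 mS
    have i1S : Integrable (fun t => φ₁ t ω * S t ω) (volume.restrict (Icc (0:ℝ) T)) :=
      integrable_mul_sq h1 hS m1 mS
    have i2S : Integrable (fun t => φ₂ t ω * S t ω) (volume.restrict (Icc (0:ℝ) T)) :=
      integrable_mul_sq h2 hS m2 mS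
    have eq1 : ∫ t in Icc (0:ℝ) T, ψ t ω * S t ω
        = 2⁻¹ * (∫ t in Icc (0:ℝ) T, φ₁ t ω * S t ω)
          + 2⁻¹ * (∫ t in Icc (0:ℝ) T, φ₂ t ω * S t ω) := by
      rw [integral_congr_ae (Filter.Eventually.of_forall
        (fun t => show ψ t ω * S t ω = 2⁻¹ * (φ₁ t ω * S t ω) + 2⁻¹ * (φ₂ t ω * S t ω) by
          simp only [hψdef]; ring)),
        integral_add (i1S.const_mul 2⁻¹) (i2S.const_mul 2⁻¹),
        integral_const_mul, integral_const_mul]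
    have eq2 : ∫ t in Icc (0:ℝ) T, (ψ t ω) ^ 2
        = (2⁻¹ * (∫ t in Icc (0:ℝ) T, (φ₁ t ω) ^ 2)
            + 2⁻¹ * (∫ t in Icc (0:ℝ) T, (φ₂ t ω) ^ 2))
          - 4⁻¹ * (∫ t in Icc (0:ℝ) T, (φ₁ t ω - φ₂ t ω) ^ 2) := by
      rw [integral_congr_ae (Filter.Eventually.of_forall
        (fun t => show (ψ t ω) ^ 2
          = (2⁻¹ * (φ₁ t ω) ^ 2 + 2⁻¹ * (φ₂ t ω) ^ 2) - 4⁻¹ * (φ₁ t ω - φ₂ t ω) ^ 2 by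
          simp only [hψdef]; ring)),
        integral_sub (show Integrable
            (fun t => 2⁻¹ * (φ₁ t ω) ^ 2 + 2⁻¹ * (φ₂ t ω) ^ 2)
            (volume.restrict (Icc (0:ℝ) T)) from (h1.const_mul 2⁻¹).add (h2.const_mul 2⁻¹))
          (hD.const_mul 4⁻¹),
        integral_add (h1.const_mul 2⁻¹) (h2.const_mul 2⁻¹),
        integral_const_mul, integral_const_mul, integral_const_mul]
    simp only [wealth]
    rw [eq1, eq2]; ring
  -- integrability over ω of the components
  have hQ1 : Integrable (fun ω => ∫ t in Icc (0:ℝ) T, (φ₁ t ω) ^ 2) μ := by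
    have := integrable_intMul (μ := μ) φ₁ φ₁ hM₁ hM₁ hsq₁ hsq₁ hφ₁2.ne hφ₁2.ne
    simpa [pow_two] using this
  have hQ2 : Integrable (fun ω => ∫ t in Icc (0:ℝ) T, (φ₂ t ω) ^ 2) μ := by
    have := integrable_intMul (μ := μ) φ₂ φ₂ hM₂ hM₂ hsq₂ hsq₂ hφ₂2.ne hφ₂2.ne
    simpa [pow_two] using this
  have hQD : Integrable (fun ω => ∫ t in Icc (0:ℝ) T, (φ₁ t ω - φ₂ t ω) ^ 2) μ := by
    have := integrable_intMul (μ := μ) (fun t ω => φ₁ t ω - φ₂ t ω)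
      (fun t ω => φ₁ t ω - φ₂ t ω) hMD hMD hsqD hsqD hED.ne hED.ne
    simpa [pow_two] using this
  have hC1 : Integrable (fun ω => ∫ t in Icc (0:ℝ) T, φ₁ t ω * S t ω) μ :=
    integrable_intMul (μ := μ) φ₁ S hM₁ hMS hsq₁ hSsq hφ₁2.ne hS2.ne
  have hC2 : Integrable (fun ω => ∫ t in Icc (0:ℝ) T, φ₂ t ω * S t ω) μ :=
    integrable_intMul (μ := μ) φ₂ S hM₂ hMS hsq₂ hSsq hφ₂2.ne hS2.ne
  have hw₁ : Integrable (wealth T Λ Φ₀ S φ₁) μ :=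
    ((hS0.const_mul (-Φ₀)).sub hC1).sub (hQ1.const_mul (Λ/2))
  have hw₂ : Integrable (wealth T Λ Φ₀ S φ₂) μ :=
    ((hS0.const_mul (-Φ₀)).sub hC2).sub (hQ2.const_mul (Λ/2))
  -- expected wealth of ψ
  have hEw : ∫ ω, wealth T Λ Φ₀ S ψ ω ∂μ
      = v + (Λ/8) * ∫ ω, (∫ t in Icc (0:ℝ) T, (φ₁ t ω - φ₂ t ω) ^ 2) ∂μ := by
    rw [integral_congr_ae hae,
      integral_add (show Integrable
          (fun ω => 2⁻¹ * wealth T Λ Φ₀ S φ₁ ω + 2⁻¹ * wealth T Λ Φ₀ S φ₂ ω) μ from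
          (hw₁.const_mul 2⁻¹).add (hw₂.const_mul 2⁻¹)) (hQD.const_mul (Λ/8)),
      integral_add (hw₁.const_mul 2⁻¹) (hw₂.const_mul 2⁻¹),
      integral_const_mul, integral_const_mul, integral_const_mul, hopt₁, hopt₂]
    ring
  have hub' : ∫ ω, wealth T Λ Φ₀ S ψ ω ∂μ ≤ v := hub ψ hadψ hEψ
  rw [hEw] at hub'
  have hRnn : (0:ℝ) ≤ ∫ ω, (∫ t in Icc (0:ℝ) T, (φ₁ t ω - φ₂ t ω) ^ 2) ∂μ :=
    integral_nonneg fun ω => integral_nonneg fun t => sq_nonneg _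
  have hR0 : ∫ ω, (∫ t in Icc (0:ℝ) T, (φ₁ t ω - φ₂ t ω) ^ 2) ∂μ = 0 := by
    nlinarith
  have hQD0 : (fun ω => ∫ t in Icc (0:ℝ) T, (φ₁ t ω - φ₂ t ω) ^ 2) =ᵐ[μ] 0 :=
    (integral_eq_zero_iff_of_nonneg_ae
      (Filter.Eventually.of_forall fun ω => integral_nonneg fun t => sq_nonneg _) hQD).1 hR0
  have hslice0 : ∀ᵐ ω ∂μ, ∀ᵐ t ∂(volume.restrict (Icc (0:ℝ) T)), φ₁ t ω = φ₂ t ω := by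
    filter_upwards [hQD0, hsqD] with ω h0 hint
    have h0' : ∫ t in Icc (0:ℝ) T, (φ₁ t ω - φ₂ t ω) ^ 2 = 0 := h0
    have := (integral_eq_zero_iff_of_nonneg_ae
      (Filter.Eventually.of_forall fun t => sq_nonneg _) hint).1 h0'
    filter_upwards [this] with t ht
    have ht' : (φ₁ t ω - φ₂ t ω) ^ 2 = 0 := ht
    have := (pow_eq_zero_iff two_ne_zero).mp ht'
    linarith [sub_eq_zero.mp this]
  -- conclude via the product lintegral
  have hNm : AEMeasurable (fun p : ℝ × Ω => ENNReal.ofReal ((φ₁ p.1 p.2 - φ₂ p.1 p.2) ^ 2))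
      ((volume.restrict (Icc (0:ℝ) T)).prod μ) :=
    ENNReal.measurable_ofReal.comp_aemeasurable (hMD.aemeasurable.pow_const 2)
  have hNzero : ∫⁻ p, ENNReal.ofReal ((φ₁ p.1 p.2 - φ₂ p.1 p.2) ^ 2)
      ∂((volume.restrict (Icc (0:ℝ) T)).prod μ) = 0 := by
    rw [MeasureTheory.lintegral_prod_symm _ hNm]
    have : ∀ᵐ ω ∂μ, ∫⁻ t in Icc (0:ℝ) T, ENNReal.ofReal ((φ₁ t ω - φ₂ t ω) ^ 2) = 0 := by
      filter_upwards [hslice0] with ω hω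
      have : ∀ᵐ t ∂(volume.restrict (Icc (0:ℝ) T)),
          ENNReal.ofReal ((φ₁ t ω - φ₂ t ω) ^ 2) = 0 := by
        filter_upwards [hω] with t ht
        simp [ht]
      rw [lintegral_congr_ae this, lintegral_zero]
    rw [lintegral_congr_ae this, lintegral_zero]
  have hN0 := (lintegral_eq_zero_iff' hNm).1 hNzero
  filter_upwards [hN0] with p hp
  have hp' : ENNReal.ofReal ((φ₁ p.1 p.2 - φ₂ p.1 p.2) ^ 2) = 0 := hp
  have hle : (φ₁ p.1 p.2 - φ₂ p.1 p.2) ^ 2 ≤ 0 := ENNReal.ofReal_eq_zero.mp hp'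
  nlinarith [sq_nonneg (φ₁ p.1 p.2 - φ₂ p.1 p.2)]
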